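/- Let m ≥ 1, let (z_i)_{i∈ℕ} be an enumeration of ℤ^m in ℝ^m, let r₁ ≥ r₂ ≥ … > 0 with r₁ < 1/2, and let Ω = ⋃_{i∈ℕ} B(z_i; r_i). Then for all t > 0, the heat content satisfies H_Ω(t) ≥ (4πt)^{-m/2} e^{-r₁²/t} ω_m² ∑_{i=1}^∞ r_i^{2m}, where ω_m is the volume of the unit ball in ℝ^m. In particular, if ∑_{i=1}^∞ r_i^{2m} = ∞ then H_Ω(t) = ∞ for every t > 0. -/

import Mathlib

open MeasureTheory Metric ENNReal

/-- The heat content of an open set `Ω ⊆ ℝᵐ` at time `t`, computed with the Euclidean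
heat kernel `p(x,y;t) = (4πt)^{-m/2} e^{-|x-y|²/(4t)}`. -/
noncomputable def heatContent {m : ℕ} (Ω : Set (EuclideanSpace ℝ (Fin m))) (t : ℝ) :
    ℝ≥0∞ :=
  ∫⁻ x in Ω, ∫⁻ y in Ω,
    ENNReal.ofReal ((4 * Real.pi * t) ^ (-(m : ℝ) / 2) * Real.exp (-dist x y ^ 2 / (4 * t)))

/-- `z : ℕ → ℝᵐ` is an enumeration of the integer lattice `ℤᵐ ⊆ ℝᵐ`. -/
def IsLatticeEnum (m : ℕ) (z : ℕ → EuclideanSpace ℝ (Fin m)) : Prop :=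
  Function.Injective z ∧
    Set.range z = {x : EuclideanSpace ℝ (Fin m) | ∀ j : Fin m, ∃ k : ℤ, x j = (k : ℝ)}

/-- Coordinate distance bounds Euclidean distance from below. -/
lemma coord_dist_le {m : ℕ} (x y : EuclideanSpace ℝ (Fin m)) (l : Fin m) :
    |x l - y l| ≤ dist x y := by
  rw [EuclideanSpace.dist_eq]
  have h1 : |x l - y l| = Real.sqrt (dist (x l) (y l) ^ 2) := by
    rw [Real.sqrt_sq (dist_nonneg), Real.dist_eq]
  rw [h1]
  apply Real.sqrt_le_sqrt
  exact Finset.single_le_sum (f := fun i => dist (x i) (y i) ^ 2)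
    (fun i _ => sq_nonneg _) (Finset.mem_univ l)

/-- For `Ω` a union of disjoint balls `B(z_i;r_i)` centred at the points of `ℤᵐ` with
decreasing radii `r₁ < 1/2`, for all `t > 0`,
`H_Ω(t) ≥ (4πt)^{-m/2} e^{-r₁²/t} ω_m² ∑ r_i^{2m}`; in particular, if `∑ r_i^{2m} = ∞`
then `H_Ω(t) = ∞` for every `t > 0`. -/
theorem heat_content_lattice_balls_lower_bound
    (m : ℕ) (hm : 1 ≤ m)
    (z : ℕ → EuclideanSpace ℝ (Fin m)) (hz : IsLatticeEnum m z)
    (r : ℕ → ℝ) (hrpos : ∀ i, 0 < r i) (hrdec : Antitone r)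
    (hr1 : r 0 < 1 / 2)
    (Ω : Set (EuclideanSpace ℝ (Fin m))) (hΩ : Ω = ⋃ i : ℕ, ball (z i) (r i))
    (ω : ℝ) (hω : ω = (volume (ball (0 : EuclideanSpace ℝ (Fin m)) 1)).toReal) :
    (∀ t : ℝ, 0 < t →
      ENNReal.ofReal ((4 * Real.pi * t) ^ (-(m : ℝ) / 2) *
            Real.exp (-(r 0) ^ 2 / t) * ω ^ 2) *
          (∑' i : ℕ, ENNReal.ofReal (r i ^ (2 * m)))
        ≤ heatContent Ω t) ∧
    (¬ Summable (fun i : ℕ => r i ^ (2 * m)) →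
      ∀ t : ℝ, 0 < t → heatContent Ω t = ⊤) := by
  obtain ⟨hzinj, hzrange⟩ := hz
  haveI : Nonempty (Fin m) := ⟨⟨0, hm⟩⟩
  haveI : Nontrivial (EuclideanSpace ℝ (Fin m)) := by
    apply Module.nontrivial_of_finrank_pos (R := ℝ)
    rw [finrank_euclideanSpace_fin]
    omega
  -- distinct lattice points are at distance ≥ 1
  have hlat : ∀ i j : ℕ, i ≠ j → 1 ≤ dist (z i) (z j) := by
    intro i j hij
    have hzi : ∀ l : Fin m, ∃ k : ℤ, z i l = (k : ℝ) := by
      have : z i ∈ Set.range z := Set.mem_range_self i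
      rw [hzrange] at this; exact this
    have hzj : ∀ l : Fin m, ∃ k : ℤ, z j l = (k : ℝ) := by
      have : z j ∈ Set.range z := Set.mem_range_self j
      rw [hzrange] at this; exact this
    have hne : z i ≠ z j := fun h => hij (hzinj h)
    have : ∃ l : Fin m, z i l ≠ z j l := by
      by_contra h
      push_neg at h
      exact hne (PiLp.ext h)
    obtain ⟨l, hl⟩ := this
    obtain ⟨k1, hk1⟩ := hzi l
    obtain ⟨k2, hk2⟩ := hzj l
    have hk : k1 ≠ k2 := by
      intro h; apply hl; rw [hk1, hk2, h]
    have h1 : (1 : ℝ) ≤ |z i l - z j l| := by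
      rw [hk1, hk2]
      have : (1 : ℤ) ≤ |k1 - k2| := Int.one_le_abs (sub_ne_zero.mpr hk)
      calc (1 : ℝ) = ((1 : ℤ) : ℝ) := by norm_num
        _ ≤ ((|k1 - k2| : ℤ) : ℝ) := by exact_mod_cast this
        _ = |((k1 : ℝ)) - (k2 : ℝ)| := by rw [Int.cast_abs, Int.cast_sub]
    exact h1.trans (coord_dist_le _ _ l)
  -- the balls are pairwise disjoint
  have hdisj : Pairwise (Function.onFun Disjoint fun i : ℕ => ball (z i) (r i)) := by
    intro i j hij
    refine ball_disjoint_ball (le_trans ?_ (hlat i j hij))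
    have h1 := hrdec (Nat.zero_le i)
    have h2 := hrdec (Nat.zero_le j)
    linarith
  set V : ℝ≥0∞ := volume (ball (0 : EuclideanSpace ℝ (Fin m)) 1) with hV
  have hVne : V ≠ ⊤ := measure_ball_lt_top.ne
  have hωV : ENNReal.ofReal ω = V := by rw [hω, ENNReal.ofReal_toReal hVne]
  have hωpos : 0 < ω := by
    rw [hω]
    exact ENNReal.toReal_pos (measure_ball_pos volume _ one_pos).ne' hVne
  have hvol : ∀ i : ℕ, volume (ball (z i) (r i)) = ENNReal.ofReal (r i ^ m) * V := by
    intro i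
    rw [Measure.addHaar_ball volume (z i) (hrpos i).le, finrank_euclideanSpace_fin]
  have key : ∀ t : ℝ, 0 < t →
      ENNReal.ofReal ((4 * Real.pi * t) ^ (-(m : ℝ) / 2) *
            Real.exp (-(r 0) ^ 2 / t) * ω ^ 2) *
          (∑' i : ℕ, ENNReal.ofReal (r i ^ (2 * m)))
        ≤ heatContent Ω t := by
    intro t ht
    set A : ℝ := (4 * Real.pi * t) ^ (-(m : ℝ) / 2) * Real.exp (-(r 0) ^ 2 / t) with hA
    have hApos : 0 < A := by
      apply mul_pos _ (Real.exp_pos _)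
      apply Real.rpow_pos_of_pos
      positivity
    set c : ℝ≥0∞ := ENNReal.ofReal A with hc
    -- pointwise kernel lower bound on each ball
    have hker : ∀ i : ℕ, ∀ x ∈ ball (z i) (r i), ∀ y ∈ ball (z i) (r i),
        c ≤ ENNReal.ofReal ((4 * Real.pi * t) ^ (-(m : ℝ) / 2) *
          Real.exp (-dist x y ^ 2 / (4 * t))) := by
      intro i x hx y hy
      apply ENNReal.ofReal_le_ofReal
      apply mul_le_mul_of_nonneg_left _ (by positivity)
      apply Real.exp_le_exp.mpr
      rw [div_le_div_iff₀ ht (by positivity)]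
      have hd : dist x y ≤ 2 * r 0 := by
        calc dist x y ≤ dist x (z i) + dist (z i) y := dist_triangle _ _ _
          _ ≤ r i + r i := add_le_add (mem_ball.mp hx).le (mem_ball'.mp hy).le
          _ ≤ r 0 + r 0 := add_le_add (hrdec (Nat.zero_le i)) (hrdec (Nat.zero_le i))
          _ = 2 * r 0 := by ring
      have hd2 : dist x y ^ 2 ≤ (2 * r 0) ^ 2 :=
        pow_le_pow_left₀ dist_nonneg hd 2
      nlinarith [mul_nonneg (sub_nonneg.mpr hd2) ht.le]
    -- per-ball lower bound
    have hball : ∀ i : ℕ,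
        c * (ENNReal.ofReal (r i ^ m) * V) * (ENNReal.ofReal (r i ^ m) * V)
          ≤ ∫⁻ x in ball (z i) (r i), ∫⁻ y in Ω,
            ENNReal.ofReal ((4 * Real.pi * t) ^ (-(m : ℝ) / 2) *
              Real.exp (-dist x y ^ 2 / (4 * t))) := by
      intro i
      have hsub : ball (z i) (r i) ⊆ Ω := by
        rw [hΩ]; exact Set.subset_iUnion (fun j => ball (z j) (r j)) i
      calc c * (ENNReal.ofReal (r i ^ m) * V) * (ENNReal.ofReal (r i ^ m) * V)
          = (c * volume (ball (z i) (r i))) * volume (ball (z i) (r i)) := by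
            rw [hvol i]
        _ = ∫⁻ _ in ball (z i) (r i), c * volume (ball (z i) (r i)) := by
            rw [setLIntegral_const]
        _ ≤ ∫⁻ x in ball (z i) (r i), ∫⁻ y in ball (z i) (r i),
              ENNReal.ofReal ((4 * Real.pi * t) ^ (-(m : ℝ) / 2) *
                Real.exp (-dist x y ^ 2 / (4 * t))) := by
            apply setLIntegral_mono' measurableSet_ball
            intro x hx
            calc c * volume (ball (z i) (r i))
                = ∫⁻ _ in ball (z i) (r i), c := (setLIntegral_const _ _).symm
              _ ≤ _ := setLIntegral_mono' measurableSet_ball (fun y hy => hker i x hx y hy)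
        _ ≤ _ := by
            apply lintegral_mono
            intro x
            exact lintegral_mono_set hsub
    -- sum over the balls
    have hsum : heatContent Ω t = ∑' i : ℕ, ∫⁻ x in ball (z i) (r i), ∫⁻ y in Ω,
        ENNReal.ofReal ((4 * Real.pi * t) ^ (-(m : ℝ) / 2) *
          Real.exp (-dist x y ^ 2 / (4 * t))) := by
      rw [heatContent, hΩ]
      exact lintegral_iUnion (fun i => measurableSet_ball) hdisj _
    rw [hsum]
    have hterm : ∀ i : ℕ,
        ENNReal.ofReal (A * ω ^ 2) * ENNReal.ofReal (r i ^ (2 * m))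
          = c * (ENNReal.ofReal (r i ^ m) * V) * (ENNReal.ofReal (r i ^ m) * V) := by
      intro i
      have hrm : (0:ℝ) ≤ r i ^ m := pow_nonneg (hrpos i).le m
      rw [← hωV, ← ENNReal.ofReal_mul hrm, hc,
        ← ENNReal.ofReal_mul hApos.le,
        ← ENNReal.ofReal_mul (by positivity : (0:ℝ) ≤ A * ω ^ 2),
        ← ENNReal.ofReal_mul (by positivity : (0:ℝ) ≤ A * (r i ^ m * ω))]
      congr 1
      rw [two_mul, pow_add]
      ring
    calc ENNReal.ofReal (A * ω ^ 2) * ∑' i : ℕ, ENNReal.ofReal (r i ^ (2 * m))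
        = ∑' i : ℕ, ENNReal.ofReal (A * ω ^ 2) * ENNReal.ofReal (r i ^ (2 * m)) :=
          ENNReal.tsum_mul_left.symm
      _ = ∑' i : ℕ, c * (ENNReal.ofReal (r i ^ m) * V) * (ENNReal.ofReal (r i ^ m) * V) := by
          exact tsum_congr hterm
      _ ≤ _ := ENNReal.tsum_le_tsum hball
  refine ⟨key, ?_⟩
  intro hns t ht
  have htop : (∑' i : ℕ, ENNReal.ofReal (r i ^ (2 * m))) = ⊤ := by
    by_contra h
    apply hns
    have := ENNReal.summable_toReal h
    apply Summable.congr this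
    intro i
    rw [ENNReal.toReal_ofReal (pow_nonneg (hrpos i).le _)]
  have hcpos : (0 : ℝ) < (4 * Real.pi * t) ^ (-(m : ℝ) / 2) *
      Real.exp (-(r 0) ^ 2 / t) * ω ^ 2 := by
    have hωpos : 0 < ω := by
      rw [hω]
      exact ENNReal.toReal_pos (measure_ball_pos volume _ one_pos).ne'
        measure_ball_lt_top.ne
    have h1 : (0:ℝ) < (4 * Real.pi * t) ^ (-(m : ℝ) / 2) :=
      Real.rpow_pos_of_pos (by positivity) _
    exact mul_pos (mul_pos h1 (Real.exp_pos _)) (pow_pos hωpos 2)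
  have := key t ht
  rw [htop, ENNReal.mul_top (by
    simp only [ne_eq, ENNReal.ofReal_eq_zero, not_le]
    exact hcpos)] at this
  exact top_le_iff.mp this
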